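/- Let n ≥ 2, 1 ≤ τ ≤ n, and let S be the τ-nice sampling on {1, …, n}: p_C = 1/C(n,τ) for every subset C of cardinality τ and p_C = 0 otherwise (so p_i = τ/n for all i). Assume each f_i : ℝ^d → ℝ is convex and M_i-smooth, and let x* satisfy ∇f(x*) = 0. Then for all x ∈ ℝ^d, Σ_C p_C ‖∇f_{v(C)}(x) − ∇f_{v(C)}(x*)‖² ≤ 2 ( (n(τ−1))/(τ(n−1)) · L + (n−τ)/(τ(n−1)) · max_i λmax(M_i) ) (f(x) − f(x*)), where L = (1/n) λmax(Σ_{i=1}^n M_i). -/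

import Mathlib

open RealInnerProductSpace

/-- The largest eigenvalue of a (symmetric) real matrix, characterized as the supremum of the
Rayleigh quotient `⟨Ax, x⟩` over the unit sphere. -/
noncomputable def lamMax {d : ℕ} (A : Matrix (Fin d) (Fin d) ℝ) : ℝ :=
  sSup {r : ℝ | ∃ x : EuclideanSpace ℝ (Fin d), ‖x‖ = 1 ∧ r = ∑ j, ∑ k, A j k * x k * x j}


open RealInnerProductSpace

section Aux

variable {d : ℕ}

private lemma esm_line_hasDerivAt (g : EuclideanSpace ℝ (Fin d) → ℝ) (hg : Differentiable ℝ g)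
    (y v : EuclideanSpace ℝ (Fin d)) (t : ℝ) :
    HasDerivAt (fun s : ℝ => g (y + s • v)) ⟪gradient g (y + t • v), v⟫ t := by
  have hline : HasDerivAt (fun s : ℝ => y + s • v) v t := by
    simpa using ((hasDerivAt_id t).smul_const v).const_add y
  have hgr := ((hg (y + t • v)).hasGradientAt).hasFDerivAt
  have := hgr.comp_hasDerivAt t hline
  simpa [InnerProductSpace.toDual_apply_apply, Function.comp_def] using this

private lemma esm_first_order (g : EuclideanSpace ℝ (Fin d) → ℝ) (hg : Differentiable ℝ g)
    (hc : ConvexOn ℝ Set.univ g) (x y : EuclideanSpace ℝ (Fin d)) :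
    g y + ⟪gradient g y, x - y⟫ ≤ g x := by
  set ψ : ℝ → ℝ := fun t => g (y + t • (x - y)) with hψ
  have hψc : ConvexOn ℝ Set.univ ψ := by
    have h2 := hc.comp_affineMap (AffineMap.lineMap y x : ℝ →ᵃ[ℝ] EuclideanSpace ℝ (Fin d))
    have : (g ∘ (AffineMap.lineMap y x : ℝ →ᵃ[ℝ] EuclideanSpace ℝ (Fin d))) = ψ := by
      funext t
      simp [hψ, AffineMap.lineMap_apply, add_comm, vsub_eq_sub, vadd_eq_add]
    simpa [this] using h2
  have hd0 : HasDerivAt ψ ⟪gradient g (y + (0:ℝ) • (x - y)), x - y⟫ 0 :=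
    esm_line_hasDerivAt g hg y (x - y) 0
  have hslope := hψc.le_slope_of_hasDerivAt (Set.mem_univ 0) (Set.mem_univ 1)
    (by norm_num) hd0
  have h01 : slope ψ 0 1 = g x - g y := by
    simp [slope_def_field, hψ]
  rw [h01] at hslope
  have : (y + (0:ℝ) • (x - y)) = y := by simp
  rw [this] at hslope
  linarith

private lemma esm_coco (g : EuclideanSpace ℝ (Fin d) → ℝ) (hg : Differentiable ℝ g)
    (hc : ConvexOn ℝ Set.univ g) (lam : ℝ) (hlam : 0 < lam)
    (hs : ∀ z h, g (z + h) ≤ g z + ⟪gradient g z, h⟫ + lam / 2 * ‖h‖ ^ 2)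
    (x y : EuclideanSpace ℝ (Fin d)) :
    ‖gradient g x - gradient g y‖ ^ 2 ≤ 2 * lam * (g x - g y - ⟪gradient g y, x - y⟫) := by
  set G := gradient g x - gradient g y with hG
  set h : EuclideanSpace ℝ (Fin d) := -(lam⁻¹ • G) with hh
  have h1 := hs x h
  have h2 := esm_first_order g hg hc (x + h) y
  have e1 : ⟪gradient g y, x + h - y⟫ = ⟪gradient g y, x - y⟫ + ⟪gradient g y, h⟫ := by
    rw [show x + h - y = (x - y) + h by abel, inner_add_right]
  have e2 : ⟪gradient g x, h⟫ - ⟪gradient g y, h⟫ = ⟪G, h⟫ := by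
    rw [hG, inner_sub_left]
  have e3 : ⟪G, h⟫ = -(lam⁻¹ * ‖G‖ ^ 2) := by
    rw [hh, inner_neg_right, real_inner_smul_right, real_inner_self_eq_norm_sq]
  have e4 : ‖h‖ ^ 2 = lam⁻¹ ^ 2 * ‖G‖ ^ 2 := by
    rw [hh, norm_neg, norm_smul]
    simp [mul_pow, abs_of_pos (inv_pos.mpr hlam)]
  have hln : lam ≠ 0 := ne_of_gt hlam
  have key : lam⁻¹ / 2 * ‖G‖ ^ 2 ≤ g x - g y - ⟪gradient g y, x - y⟫ := by
    have := h1
    rw [e4] at this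
    have h2' := h2
    rw [e1] at h2'
    have e5 : lam / 2 * (lam⁻¹ ^ 2 * ‖G‖ ^ 2) = lam⁻¹ / 2 * ‖G‖ ^ 2 := by
      field_simp
    have e6 : -(lam⁻¹ * ‖G‖ ^ 2) + lam⁻¹ / 2 * ‖G‖ ^ 2 = -(lam⁻¹ / 2 * ‖G‖ ^ 2) := by ring
    linarith [this, h2', e2, e3]
  have hl2 : (0:ℝ) < 2 * lam := by linarith
  calc ‖G‖ ^ 2 = 2 * lam * (lam⁻¹ / 2 * ‖G‖ ^ 2) := by
        field_simp
      _ ≤ 2 * lam * (g x - g y - ⟪gradient g y, x - y⟫) := by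
        exact mul_le_mul_of_nonneg_left key (le_of_lt hl2)

private lemma esm_rayleigh_set_eq (A : Matrix (Fin d) (Fin d) ℝ) :
    {r : ℝ | ∃ x : EuclideanSpace ℝ (Fin d), ‖x‖ = 1 ∧ r = ∑ j, ∑ k, A j k * x k * x j}
      = (fun x : EuclideanSpace ℝ (Fin d) => ∑ j, ∑ k, A j k * x k * x j) ''
          (Metric.sphere (0 : EuclideanSpace ℝ (Fin d)) 1) := by
  ext r
  simp only [Set.mem_setOf_eq, Set.mem_image, Metric.mem_sphere, dist_zero_right]
  constructor
  · rintro ⟨x, hx, rfl⟩; exact ⟨x, hx, rfl⟩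
  · rintro ⟨x, hx, rfl⟩; exact ⟨x, hx, rfl⟩

private lemma esm_rayleigh_bddAbove (A : Matrix (Fin d) (Fin d) ℝ) :
    BddAbove {r : ℝ | ∃ x : EuclideanSpace ℝ (Fin d), ‖x‖ = 1 ∧
      r = ∑ j, ∑ k, A j k * x k * x j} := by
  rw [esm_rayleigh_set_eq]
  have hQ : Continuous (fun x : EuclideanSpace ℝ (Fin d) => ∑ j, ∑ k, A j k * x k * x j) := by
    apply continuous_finset_sum
    intro j _
    apply continuous_finset_sum
    intro k _
    fun_prop
  exact ((isCompact_sphere _ _).image hQ).bddAbove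

private lemma esm_quad_le_lamMax (A : Matrix (Fin d) (Fin d) ℝ) (h : EuclideanSpace ℝ (Fin d)) :
    ∑ j, ∑ k, A j k * h k * h j ≤ lamMax A * ‖h‖ ^ 2 := by
  rcases eq_or_ne h 0 with rfl | hh
  · simp [lamMax]
  · set u : EuclideanSpace ℝ (Fin d) := ‖h‖⁻¹ • h with hu
    have hn : ‖h‖ ≠ 0 := norm_ne_zero_iff.mpr hh
    have hu1 : ‖u‖ = 1 := norm_smul_inv_norm hh
    have hmem : (∑ j, ∑ k, A j k * u k * u j) ∈
        {r : ℝ | ∃ x : EuclideanSpace ℝ (Fin d), ‖x‖ = 1 ∧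
          r = ∑ j, ∑ k, A j k * x k * x j} := ⟨u, hu1, rfl⟩
    have hle : (∑ j, ∑ k, A j k * u k * u j) ≤ lamMax A :=
      le_csSup (esm_rayleigh_bddAbove A) hmem
    have hQu : ∑ j, ∑ k, A j k * u k * u j = ‖h‖⁻¹ ^ 2 * ∑ j, ∑ k, A j k * h k * h j := by
      rw [Finset.mul_sum]
      apply Finset.sum_congr rfl
      intro j _
      rw [Finset.mul_sum]
      apply Finset.sum_congr rfl
      intro k _
      simp only [hu, PiLp.smul_apply, smul_eq_mul]
      ring
    rw [hQu] at hle
    have h2 : (0:ℝ) < ‖h‖ ^ 2 := by positivity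
    calc ∑ j, ∑ k, A j k * h k * h j
        = ‖h‖ ^ 2 * (‖h‖⁻¹ ^ 2 * ∑ j, ∑ k, A j k * h k * h j) := by field_simp
      _ ≤ ‖h‖ ^ 2 * lamMax A := mul_le_mul_of_nonneg_left hle (le_of_lt h2)
      _ = lamMax A * ‖h‖ ^ 2 := mul_comm _ _

private lemma esm_lamMax_pos (hd : 0 < d) (A : Matrix (Fin d) (Fin d) ℝ)
    (hA : ∀ x : Fin d → ℝ, x ≠ 0 → 0 < dotProduct (star x) (A.mulVec x)) :
    0 < lamMax A := by
  set u : EuclideanSpace ℝ (Fin d) := EuclideanSpace.single ⟨0, hd⟩ (1:ℝ) with hu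
  have hu1 : ‖u‖ = 1 := by simp [hu, EuclideanSpace.norm_single]
  have hune : (fun j => u j) ≠ (0 : Fin d → ℝ) := by
    intro hcontra
    have := congrFun hcontra ⟨0, hd⟩
    simp [hu, EuclideanSpace.single_apply] at this
  have hpos := hA (fun j => u j) hune
  have hQ : (0:ℝ) < ∑ j, ∑ k, A j k * u k * u j := by
    have : dotProduct (star fun j => u j) (A.mulVec fun j => u j)
        = ∑ j, ∑ k, A j k * u k * u j := by
      simp only [star_trivial, dotProduct, Matrix.mulVec, dotProduct]
      apply Finset.sum_congr rfl
      intro j _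
      rw [Finset.mul_sum]
      apply Finset.sum_congr rfl
      intro k _
      ring
    rw [this] at hpos
    simpa using hpos
  exact lt_of_lt_of_le hQ (le_csSup (esm_rayleigh_bddAbove A) ⟨u, hu1, rfl⟩)

private lemma esm_nat_id1 {n τ : ℕ} (hn : 1 ≤ n) (hτ1 : 1 ≤ τ) :
    n * (n-1).choose (τ-1) = τ * n.choose τ := by
  have h := Nat.add_one_mul_choose_eq (n-1) (τ-1)
  have h1 : n - 1 + 1 = n := by omega
  have h2 : τ - 1 + 1 = τ := by omega
  simp only [Nat.succ_eq_add_one, h1, h2] at h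
  rw [h]; ring

private lemma esm_nat_id2 {n τ : ℕ} (hn : 2 ≤ n) (hτ1 : 2 ≤ τ) (hτn : τ ≤ n) :
    n * (n-1) * (n-2).choose (τ-2) = τ * (τ-1) * n.choose τ := by
  have h1 := esm_nat_id1 (show 1 ≤ n by omega) (show 1 ≤ τ by omega)
  have h2 := esm_nat_id1 (show 1 ≤ n - 1 by omega) (show 1 ≤ τ - 1 by omega)
  have e1 : n - 1 - 1 = n - 2 := by omega
  have e2 : τ - 1 - 1 = τ - 2 := by omega
  rw [e1, e2] at h2
  calc n * (n-1) * (n-2).choose (τ-2) = n * ((n-1) * (n-2).choose (τ-2)) := by ring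
    _ = n * ((τ-1) * (n-1).choose (τ-1)) := by rw [h2]
    _ = (τ-1) * (n * (n-1).choose (τ-1)) := by ring
    _ = (τ-1) * (τ * n.choose τ) := by rw [h1]
    _ = τ * (τ-1) * n.choose τ := by ring

private lemma esm_count_subsets {n : ℕ} (τ : ℕ) (S : Finset (Fin n)) (hS : S.card ≤ τ) :
    (Finset.univ.filter (fun C : Finset (Fin n) => C.card = τ ∧ S ⊆ C)).card
      = (n - S.card).choose (τ - S.card) := by
  classical
  have hcard : (Finset.univ \ S : Finset (Fin n)).card = n - S.card := by
    rw [Finset.card_sdiff_of_subset (Finset.subset_univ S), Finset.card_univ, Fintype.card_fin]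
  rw [← hcard, ← Finset.card_powersetCard (τ - S.card) (Finset.univ \ S)]
  apply Finset.card_bij' (fun C _ => C \ S) (fun D _ => D ∪ S)
  · intro C hC
    simp only [Finset.mem_filter, Finset.mem_univ, true_and] at hC
    rw [Finset.mem_powersetCard]
    constructor
    · exact Finset.sdiff_subset_sdiff (Finset.subset_univ C) (le_refl S)
    · rw [Finset.card_sdiff_of_subset hC.2, hC.1]
  · intro D hD
    rw [Finset.mem_powersetCard] at hD
    have hdisj : Disjoint D S := by
      have := hD.1
      intro u hu1 hu2
      intro a ha
      have h1 := hu1 ha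
      have h2 := hu2 ha
      have := this h1
      simp only [Finset.mem_sdiff] at this
      exact absurd h2 this.2
    simp only [Finset.mem_filter, Finset.mem_univ, true_and]
    constructor
    · rw [Finset.card_union_of_disjoint hdisj, hD.2, Nat.sub_add_cancel hS]
    · exact Finset.subset_union_right
  · intro C hC
    simp only [Finset.mem_filter, Finset.mem_univ, true_and] at hC
    exact Finset.sdiff_union_of_subset hC.2
  · intro D hD
    rw [Finset.mem_powersetCard] at hD
    apply Finset.union_sdiff_cancel_right
    intro u hu1 hu2
    intro a ha
    have h1 := hD.1 (hu1 ha)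
    simp only [Finset.mem_sdiff] at h1
    exact absurd (hu2 ha) h1.2

private lemma esm_convexOn_sum {ι : Type*} (s : Finset ι) (g : ι → EuclideanSpace ℝ (Fin d) → ℝ)
    (h : ∀ i ∈ s, ConvexOn ℝ Set.univ (g i)) :
    ConvexOn ℝ Set.univ (fun x => ∑ i ∈ s, g i x) := by
  classical
  induction s using Finset.induction_on with
  | empty => simpa using convexOn_const (0:ℝ) convex_univ
  | @insert a s' hnotmem ih =>
    have h1 := h a (Finset.mem_insert_self a s')
    have h2 := ih (fun i hi => h i (Finset.mem_insert_of_mem hi))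
    have := h1.add h2
    simpa [Finset.sum_insert hnotmem, Pi.add_def] using this

private lemma esm_expectation_identity {n : ℕ} (hn : 2 ≤ n) {τ : ℕ} (hτ1 : 1 ≤ τ) (hτn : τ ≤ n)
    (a : Fin n → EuclideanSpace ℝ (Fin d)) :
    ((n:ℝ) * ((n:ℝ)-1)) * ∑ C ∈ Finset.univ.filter (fun C : Finset (Fin n) => C.card = τ),
        ‖∑ i ∈ C, a i‖ ^ 2
      = (n.choose τ : ℝ) * ((τ:ℝ) * ((n:ℝ) - (τ:ℝ)) * ∑ i, ‖a i‖^2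
          + (τ:ℝ) * ((τ:ℝ) - 1) * ‖∑ i, a i‖^2) := by
  classical
  have hdiag : ∀ i : Fin n,
      ((Finset.univ.filter (fun C : Finset (Fin n) => C.card = τ ∧ i ∈ C ∧ i ∈ C)).card : ℝ)
        * ((n:ℝ) * ((n:ℝ)-1)) = (n.choose τ : ℝ) * (τ:ℝ) * ((n:ℝ)-1) := by
    intro i
    have hfe : (Finset.univ.filter (fun C : Finset (Fin n) => C.card = τ ∧ i ∈ C ∧ i ∈ C))
        = (Finset.univ.filter (fun C : Finset (Fin n) => C.card = τ ∧ {i} ⊆ C)) := by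
      apply Finset.filter_congr
      intro C _
      simp [Finset.singleton_subset_iff, and_self]
    rw [hfe, esm_count_subsets τ {i} (by simpa using hτ1), Finset.card_singleton]
    have hid := esm_nat_id1 (show 1 ≤ n by omega) hτ1
    have hc : ((n * (n-1).choose (τ-1) : ℕ) : ℝ) = ((τ * n.choose τ : ℕ) : ℝ) := by
      exact_mod_cast congrArg (Nat.cast : ℕ → ℝ) hid
    push_cast at hc
    have hn1 : ((n - 1 : ℕ) : ℝ) = (n:ℝ) - 1 := by
      have : (1:ℕ) ≤ n := by omega
      push_cast [this]; ring
    nlinarith [hc]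
  have hoff : ∀ i j : Fin n, i ≠ j →
      ((Finset.univ.filter (fun C : Finset (Fin n) => C.card = τ ∧ i ∈ C ∧ j ∈ C)).card : ℝ)
        * ((n:ℝ) * ((n:ℝ)-1)) = (n.choose τ : ℝ) * (τ:ℝ) * ((τ:ℝ)-1) := by
    intro i j hij
    rcases Nat.lt_or_ge τ 2 with hτ2 | hτ2
    · have hτe : τ = 1 := by omega
      have hfe : (Finset.univ.filter (fun C : Finset (Fin n) => C.card = τ ∧ i ∈ C ∧ j ∈ C))
          = ∅ := by
        apply Finset.filter_false_of_mem
        rintro C _ ⟨hc, hi, hj⟩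
        have : 2 ≤ C.card := Finset.one_lt_card.mpr ⟨i, hi, j, hj, hij⟩
        omega
      rw [hfe]
      simp [hτe]
    · have hfe : (Finset.univ.filter (fun C : Finset (Fin n) => C.card = τ ∧ i ∈ C ∧ j ∈ C))
          = (Finset.univ.filter (fun C : Finset (Fin n) => C.card = τ ∧ {i, j} ⊆ C)) := by
        apply Finset.filter_congr
        intro C _
        simp [Finset.insert_subset_iff, Finset.singleton_subset_iff]
      have hcard2 : ({i, j} : Finset (Fin n)).card = 2 := Finset.card_pair hij
      rw [hfe, esm_count_subsets τ {i,j} (by omega), hcard2]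
      have hid := esm_nat_id2 hn hτ2 hτn
      have hc := congrArg (fun m : ℕ => (m : ℝ)) hid
      simp only [Nat.cast_mul] at hc
      rw [Nat.cast_sub (show (1:ℕ) ≤ n by omega), Nat.cast_sub (show (1:ℕ) ≤ τ by omega)] at hc
      push_cast at hc
      nlinarith [hc]
  set t : Fin n → Fin n → ℝ := fun i j => ⟪a i, a j⟫ with ht
  have inner_expand : ∀ C : Finset (Fin n), ‖∑ i ∈ C, a i‖ ^ 2
      = ∑ i, ∑ j, (if i ∈ C ∧ j ∈ C then t i j else 0) := by
    intro C
    rw [← real_inner_self_eq_norm_sq, sum_inner]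
    have e1 : ∀ i : Fin n, ⟪a i, ∑ j ∈ C, a j⟫ = ∑ j ∈ C, t i j := fun i => inner_sum C a (a i)
    calc ∑ i ∈ C, ⟪a i, ∑ j ∈ C, a j⟫
        = ∑ i ∈ C, ∑ j ∈ C, t i j := Finset.sum_congr rfl (fun i _ => e1 i)
      _ = ∑ i, (if i ∈ C then ∑ j ∈ C, t i j else 0) := by
          rw [Finset.sum_ite_mem, Finset.univ_inter]
      _ = ∑ i, ∑ j, (if i ∈ C ∧ j ∈ C then t i j else 0) := by
          apply Finset.sum_congr rfl
          intro i _
          by_cases hi : i ∈ C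
          · rw [if_pos hi]
            rw [show (∑ j ∈ C, t i j) = ∑ j, (if j ∈ C then t i j else 0) by
              rw [Finset.sum_ite_mem, Finset.univ_inter]]
            apply Finset.sum_congr rfl
            intro j _
            by_cases hj : j ∈ C <;> simp [hi, hj]
          · rw [if_neg hi]
            rw [eq_comm]
            apply Finset.sum_eq_zero
            intro j _
            simp [hi]
  have swap : ∑ C ∈ Finset.univ.filter (fun C : Finset (Fin n) => C.card = τ),
      ‖∑ i ∈ C, a i‖ ^ 2
      = ∑ i, ∑ j, ((Finset.univ.filter
          (fun C : Finset (Fin n) => C.card = τ ∧ i ∈ C ∧ j ∈ C)).card : ℝ) * t i j := by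
    rw [Finset.sum_congr rfl (fun C _ => inner_expand C)]
    rw [Finset.sum_comm]
    apply Finset.sum_congr rfl
    intro i _
    rw [Finset.sum_comm]
    apply Finset.sum_congr rfl
    intro j _
    rw [← Finset.sum_filter, Finset.filter_filter, Finset.sum_const, nsmul_eq_mul]
  have total : ∑ i, ∑ j, t i j = ‖∑ i, a i‖ ^ 2 := by
    rw [← real_inner_self_eq_norm_sq, sum_inner]
    exact Finset.sum_congr rfl (fun i _ => (inner_sum _ _ _).symm)
  have diagsum : ∀ i, t i i = ‖a i‖ ^ 2 := fun i => real_inner_self_eq_norm_sq (a i)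
  rw [swap, Finset.mul_sum]
  have key : ∀ i : Fin n, ((n:ℝ) * ((n:ℝ)-1)) * ∑ j, ((Finset.univ.filter
        (fun C : Finset (Fin n) => C.card = τ ∧ i ∈ C ∧ j ∈ C)).card : ℝ) * t i j
      = (n.choose τ : ℝ) * (τ:ℝ) * ((τ:ℝ)-1) * ∑ j, t i j
        + (n.choose τ : ℝ) * (τ:ℝ) * ((n:ℝ)-(τ:ℝ)) * t i i := by
    intro i
    rw [Finset.mul_sum]
    have e : ∀ j : Fin n, ((n:ℝ) * ((n:ℝ)-1)) * (((Finset.univ.filter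
          (fun C : Finset (Fin n) => C.card = τ ∧ i ∈ C ∧ j ∈ C)).card : ℝ) * t i j)
        = (n.choose τ : ℝ) * (τ:ℝ) * ((τ:ℝ)-1) * t i j
          + (if j = i then (n.choose τ : ℝ) * (τ:ℝ) * ((n:ℝ)-(τ:ℝ)) * t i i else 0) := by
      intro j
      by_cases hij : j = i
      · subst hij
        rw [if_pos rfl]
        have := hdiag j
        linear_combination t j j * this
      · rw [if_neg hij]
        have := hoff i j (fun hcontra => hij hcontra.symm)
        linear_combination t i j * this
    rw [Finset.sum_congr rfl (fun j _ => e j), Finset.sum_add_distrib,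
      Finset.sum_ite_eq' Finset.univ i
        (fun _ => (n.choose τ : ℝ) * (τ:ℝ) * ((n:ℝ)-(τ:ℝ)) * t i i),
      if_pos (Finset.mem_univ i), ← Finset.mul_sum]
  rw [Finset.sum_congr rfl (fun i _ => key i), Finset.sum_add_distrib, ← Finset.mul_sum,
    ← Finset.mul_sum, total]
  rw [Finset.sum_congr rfl (fun i (_ : i ∈ Finset.univ) => diagsum i)]
  ring

end Aux

set_option maxHeartbeats 1000000 in
/-- **Proposition 2(iv) (`τ`-nice sampling).** Let `n ≥ 2`, `1 ≤ τ ≤ n`, and let `S` be the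
`τ`-nice sampling: `p_C = 1/C(n,τ)` for `|C| = τ` and `p_C = 0` otherwise. If each `f_i` is
convex and `M_i`-smooth and `∇f(x*) = 0`, then for all `x`,
`Σ_C p_C ‖∇f_{v(C)}(x) − ∇f_{v(C)}(x*)‖²
  ≤ 2 ((n(τ−1))/(τ(n−1)) L + (n−τ)/(τ(n−1)) max_i λmax(M_i)) (f(x) − f(x*))`,
where `L = (1/n) λmax(Σ_i M_i)`. -/
theorem expected_smoothness_tau_nice_sampling
    {d n : ℕ} (hn : 2 ≤ n)
    (τ : ℕ) (hτ1 : 1 ≤ τ) (hτn : τ ≤ n)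
    (p : Finset (Fin n) → ℝ)
    (hp : ∀ C : Finset (Fin n),
      p C = if C.card = τ then 1 / (n.choose τ : ℝ) else 0)
    (q : Fin n → ℝ)
    (hq : ∀ i, q i = ∑ C ∈ Finset.univ.filter (fun C : Finset (Fin n) => i ∈ C), p C)
    (f : Fin n → EuclideanSpace ℝ (Fin d) → ℝ)
    (hdiff : ∀ i, Differentiable ℝ (f i))
    (hconv : ∀ i, ConvexOn ℝ Set.univ (f i))
    (M : Fin n → Matrix (Fin d) (Fin d) ℝ)
    (hMpd : ∀ i, (M i).PosDef)
    (hsmooth : ∀ i (x h : EuclideanSpace ℝ (Fin d)),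
      f i (x + h) ≤ f i x + ⟪gradient (f i) x, h⟫ + (1 / 2) * ∑ j, ∑ k, M i j k * h k * h j)
    (F : EuclideanSpace ℝ (Fin d) → ℝ)
    (hF : ∀ x, F x = (1 / (n : ℝ)) * ∑ i, f i x)
    (xstar : EuclideanSpace ℝ (Fin d))
    (hcrit : gradient F xstar = 0)
    (gC : Finset (Fin n) → EuclideanSpace ℝ (Fin d) → EuclideanSpace ℝ (Fin d))
    (hgC : ∀ C x, gC C x = ((n : ℝ)⁻¹) • ∑ i ∈ C, (q i)⁻¹ • gradient (f i) x)
    (L : ℝ) (hL : L = (1 / (n : ℝ)) * lamMax (∑ i, M i)) :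
    ∀ x, ∑ C : Finset (Fin n), p C * ‖gC C x - gC C xstar‖ ^ 2
        ≤ 2 * (((n : ℝ) * ((τ : ℝ) - 1)) / ((τ : ℝ) * ((n : ℝ) - 1)) * L
              + ((n : ℝ) - (τ : ℝ)) / ((τ : ℝ) * ((n : ℝ) - 1))
                  * ⨆ i : Fin n, lamMax (M i))
            * (F x - F xstar) := by
  intro x
  classical
  rcases Nat.eq_zero_or_pos d with hd0 | hd
  · subst hd0
    have hx : x = xstar := Subsingleton.elim x xstar
    rw [hx]
    simp
  -- main case : 0 < d
  have hnR : (2:ℝ) ≤ (n:ℝ) := by exact_mod_cast hn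
  have hn0 : (0:ℝ) < (n:ℝ) := by linarith
  have hn1 : (0:ℝ) < (n:ℝ) - 1 := by linarith
  have hτ0 : (0:ℝ) < (τ:ℝ) := by exact_mod_cast hτ1
  have hτleN : (τ:ℝ) ≤ (n:ℝ) := by exact_mod_cast hτn
  have hch0 : (0:ℝ) < (n.choose τ : ℝ) := by exact_mod_cast Nat.choose_pos hτn
  haveI : Nonempty (Fin n) := ⟨⟨0, by omega⟩⟩
  -- value of q
  have hqv : ∀ i : Fin n, q i = (τ:ℝ) / (n:ℝ) := by
    intro i
    rw [hq i]
    have : ∀ C ∈ Finset.univ.filter (fun C : Finset (Fin n) => i ∈ C),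
        p C = if C.card = τ then 1 / (n.choose τ : ℝ) else 0 := fun C _ => hp C
    rw [Finset.sum_congr rfl this, ← Finset.sum_filter, Finset.filter_filter,
      Finset.sum_const, nsmul_eq_mul]
    have hfe : (Finset.univ.filter (fun C : Finset (Fin n) => i ∈ C ∧ C.card = τ))
        = (Finset.univ.filter (fun C : Finset (Fin n) => C.card = τ ∧ {i} ⊆ C)) := by
      apply Finset.filter_congr
      intro C _
      simp [Finset.singleton_subset_iff, and_comm]
    rw [hfe, esm_count_subsets τ {i} (by simpa using hτ1), Finset.card_singleton]
    have hid := esm_nat_id1 (show 1 ≤ n by omega) hτ1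
    have hc : ((n : ℝ)) * (((n-1).choose (τ-1) : ℕ) : ℝ) = (τ:ℝ) * (n.choose τ : ℝ) := by
      exact_mod_cast congrArg (Nat.cast : ℕ → ℝ) hid
    field_simp
    linear_combination hc
  have hqinv : ∀ i : Fin n, (q i)⁻¹ = (n:ℝ) / (τ:ℝ) := by
    intro i
    rw [hqv i, inv_div]
  -- gradient of F
  have hgradF : ∀ z, HasGradientAt F (((n:ℝ)⁻¹) • ∑ i, gradient (f i) z) z := by
    intro z
    have hFfun : F = fun y => (1 / (n:ℝ)) * ∑ i, f i y := funext hF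
    have hsum : HasFDerivAt (fun y => ∑ i, f i y)
        (∑ i, InnerProductSpace.toDual ℝ (EuclideanSpace ℝ (Fin d)) (gradient (f i) z)) z :=
      HasFDerivAt.fun_sum (fun i _ => ((hdiff i z).hasGradientAt).hasFDerivAt)
    have hmul := hsum.const_mul (1 / (n:ℝ))
    rw [← hFfun] at hmul
    have := hmul.hasGradientAt
    have heq : (InnerProductSpace.toDual ℝ (EuclideanSpace ℝ (Fin d))).symm
        ((1 / (n:ℝ)) • ∑ i, InnerProductSpace.toDual ℝ (EuclideanSpace ℝ (Fin d))
          (gradient (f i) z))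
        = ((n:ℝ)⁻¹) • ∑ i, gradient (f i) z := by
      rw [map_smul, map_sum]
      simp [one_div, gradient]
    rwa [heq] at this
  have hgradFeq : ∀ z, gradient F z = ((n:ℝ)⁻¹) • ∑ i, gradient (f i) z :=
    fun z => (hgradF z).gradient
  have hdF : Differentiable ℝ F := fun z => (hgradF z).differentiableAt
  -- convexity of F
  have hconvF : ConvexOn ℝ Set.univ F := by
    have h1 : ConvexOn ℝ Set.univ (fun y => ∑ i, f i y) :=
      esm_convexOn_sum Finset.univ f (fun i _ => hconv i)
    have h2 := h1.smul (show (0:ℝ) ≤ 1 / (n:ℝ) by positivity)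
    have : F = fun y => (1 / (n:ℝ)) • ∑ i, f i y := by
      funext y; rw [hF y]; simp
    rw [this]; exact h2
  -- critical point
  have hcrit' : ∑ i, gradient (f i) xstar = 0 := by
    have := hgradFeq xstar
    rw [hcrit] at this
    have h0 : ((n:ℝ)⁻¹) • ∑ i, gradient (f i) xstar = 0 := this.symm
    rcases smul_eq_zero.mp h0 with h | h
    · exact absurd h (by positivity)
    · exact h
  -- the vectors a i
  set a : Fin n → EuclideanSpace ℝ (Fin d) :=
    fun i => gradient (f i) x - gradient (f i) xstar with ha
  have hsuma : ∑ i, a i = (n:ℝ) • gradient F x := by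
    rw [ha]
    rw [Finset.sum_sub_distrib, hcrit', sub_zero, hgradFeq x, smul_smul]
    rw [mul_inv_cancel₀ (ne_of_gt hn0), one_smul]
  -- lambda-bar
  set lamb : ℝ := ⨆ i : Fin n, lamMax (M i) with hlamb
  have hbdd : BddAbove (Set.range fun i : Fin n => lamMax (M i)) :=
    Set.Finite.bddAbove (Set.finite_range _)
  have hlami : ∀ i, lamMax (M i) ≤ lamb := fun i => le_ciSup hbdd i
  have hlamipos : ∀ i, 0 < lamMax (M i) := fun i => esm_lamMax_pos hd (M i) (fun v hv => (hMpd i).dotProduct_mulVec_pos hv)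
  -- L positivity
  have hLpos : 0 < L := by
    rw [hL]
    have hpos : 0 < lamMax (∑ i, M i) := by
      apply esm_lamMax_pos hd
      intro v hv
      have hexp : dotProduct (star v) ((∑ i, M i).mulVec v)
          = ∑ i, dotProduct (star v) ((M i).mulVec v) := by
        simp only [star_trivial, dotProduct, Matrix.mulVec, Matrix.sum_apply,
          Finset.sum_apply, Finset.sum_mul, Finset.mul_sum]
        rw [Finset.sum_comm]
        calc ∑ y : Fin d, ∑ x : Fin d, ∑ i : Fin n, v x * (M i x y * v y)
            = ∑ y : Fin d, ∑ i : Fin n, ∑ x : Fin d, v x * (M i x y * v y) :=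
              Finset.sum_congr rfl (fun y _ => Finset.sum_comm)
          _ = ∑ i : Fin n, ∑ y : Fin d, ∑ x : Fin d, v x * (M i x y * v y) := Finset.sum_comm
          _ = ∑ i : Fin n, ∑ x : Fin d, ∑ y : Fin d, v x * (M i x y * v y) :=
              Finset.sum_congr rfl (fun i _ => Finset.sum_comm)
      rw [hexp]
      apply Finset.sum_pos
      · intro i _
        exact (hMpd i).dotProduct_mulVec_pos hv
      · exact Finset.univ_nonempty
    positivity
  -- smoothness of F with constant L
  have hsmoothF : ∀ z h, F (z + h) ≤ F z + ⟪gradient F z, h⟫ + L / 2 * ‖h‖ ^ 2 := by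
    intro z h
    have hsum_le : ∑ i, f i (z + h)
        ≤ ∑ i, (f i z + ⟪gradient (f i) z, h⟫ + (1/2) * ∑ j, ∑ k, M i j k * h k * h j) :=
      Finset.sum_le_sum (fun i _ => hsmooth i z h)
    have hQsum : ∑ i, ∑ j, ∑ k, M i j k * h k * h j
        = ∑ j, ∑ k, (∑ i, M i) j k * h k * h j := by
      rw [Finset.sum_comm]
      apply Finset.sum_congr rfl
      intro j _
      rw [Finset.sum_comm]
      apply Finset.sum_congr rfl
      intro k _
      rw [Matrix.sum_apply, ← Finset.sum_mul, ← Finset.sum_mul]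
    have hQle : ∑ j, ∑ k, (∑ i, M i) j k * h k * h j ≤ lamMax (∑ i, M i) * ‖h‖ ^ 2 :=
      esm_quad_le_lamMax _ h
    have hInner : ⟪gradient F z, h⟫ = ((n:ℝ)⁻¹) * ∑ i, ⟪gradient (f i) z, h⟫ := by
      rw [hgradFeq z, real_inner_smul_left, sum_inner]
    have hlamL : lamMax (∑ i, M i) = (n:ℝ) * L := by
      rw [hL]; field_simp
    have expand : ∑ i, (f i z + ⟪gradient (f i) z, h⟫ + (1/2) * ∑ j, ∑ k, M i j k * h k * h j)
        = (∑ i, f i z) + (∑ i, ⟪gradient (f i) z, h⟫)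
          + (1/2) * ∑ i, ∑ j, ∑ k, M i j k * h k * h j := by
      rw [Finset.sum_add_distrib, Finset.sum_add_distrib, Finset.mul_sum]
    rw [hF (z + h), hF z, hInner]
    rw [expand] at hsum_le
    rw [hQsum] at hsum_le
    have h1n : (0:ℝ) < 1 / (n:ℝ) := by positivity
    have step := mul_le_mul_of_nonneg_left hsum_le (le_of_lt h1n)
    calc (1 / (n:ℝ)) * ∑ i, f i (z + h)
        ≤ (1 / (n:ℝ)) * ((∑ i, f i z) + (∑ i, ⟪gradient (f i) z, h⟫)
            + (1/2) * ∑ j, ∑ k, (∑ i, M i) j k * h k * h j) := step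
      _ ≤ (1 / (n:ℝ)) * ((∑ i, f i z) + (∑ i, ⟪gradient (f i) z, h⟫)
            + (1/2) * (lamMax (∑ i, M i) * ‖h‖ ^ 2)) := by
          apply mul_le_mul_of_nonneg_left _ (le_of_lt h1n)
          have := mul_le_mul_of_nonneg_left hQle (show (0:ℝ) ≤ 1/2 by norm_num)
          linarith
      _ = (1 / (n:ℝ)) * (∑ i, f i z) + ((n:ℝ)⁻¹) * (∑ i, ⟪gradient (f i) z, h⟫)
            + L / 2 * ‖h‖ ^ 2 := by
          rw [hlamL]
          field_simp
  -- distance D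
  set D : ℝ := F x - F xstar with hD
  have hcoF := esm_coco F hdF hconvF L hLpos hsmoothF x xstar
  have hgFx : ‖gradient F x‖ ^ 2 ≤ 2 * L * D := by
    rw [hcrit] at hcoF
    simpa [hD] using hcoF
  -- per-function bounds
  have hDelta : ∀ i : Fin n,
      0 ≤ f i x - f i xstar - ⟪gradient (f i) xstar, x - xstar⟫ := by
    intro i
    have := esm_first_order (f i) (hdiff i) (hconv i) x xstar
    linarith
  have hai : ∀ i : Fin n, ‖a i‖ ^ 2
      ≤ 2 * lamb * (f i x - f i xstar - ⟪gradient (f i) xstar, x - xstar⟫) := by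
    intro i
    have hsi : ∀ z h, f i (z + h) ≤ f i z + ⟪gradient (f i) z, h⟫
        + lamMax (M i) / 2 * ‖h‖ ^ 2 := by
      intro z h
      have h1 := hsmooth i z h
      have h2 := esm_quad_le_lamMax (M i) h
      linarith
    have := esm_coco (f i) (hdiff i) (hconv i) (lamMax (M i)) (hlamipos i) hsi x xstar
    have hmono : 2 * lamMax (M i) * (f i x - f i xstar - ⟪gradient (f i) xstar, x - xstar⟫)
        ≤ 2 * lamb * (f i x - f i xstar - ⟪gradient (f i) xstar, x - xstar⟫) := by
      apply mul_le_mul_of_nonneg_right _ (hDelta i)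
      linarith [hlami i]
    exact le_trans this hmono
  have hsumDelta : ∑ i, (f i x - f i xstar - ⟪gradient (f i) xstar, x - xstar⟫)
      = (n:ℝ) * D := by
    rw [Finset.sum_sub_distrib, Finset.sum_sub_distrib]
    rw [← sum_inner, hcrit']
    have hfx : ∑ i, f i x = (n:ℝ) * F x := by
      rw [hF x]; field_simp
    have hfxs : ∑ i, f i xstar = (n:ℝ) * F xstar := by
      rw [hF xstar]; field_simp
    rw [hfx, hfxs]
    simp only [inner_zero_left, sub_zero, hD]
    ring
  have hS1 : ∑ i, ‖a i‖ ^ 2 ≤ 2 * lamb * ((n:ℝ) * D) := by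
    calc ∑ i, ‖a i‖ ^ 2
        ≤ ∑ i, 2 * lamb * (f i x - f i xstar - ⟪gradient (f i) xstar, x - xstar⟫) :=
          Finset.sum_le_sum (fun i _ => hai i)
      _ = 2 * lamb * ((n:ℝ) * D) := by rw [← Finset.mul_sum, hsumDelta]
  have hS2 : ‖∑ i, a i‖ ^ 2 ≤ (n:ℝ) ^ 2 * (2 * L * D) := by
    rw [hsuma, norm_smul]
    have : (‖(n:ℝ)‖ * ‖gradient F x‖) ^ 2 = (n:ℝ)^2 * ‖gradient F x‖ ^ 2 := by
      rw [mul_pow, Real.norm_eq_abs, sq_abs]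
    rw [this]
    exact mul_le_mul_of_nonneg_left hgFx (by positivity)
  -- rewrite the LHS
  have hgCdiff : ∀ C : Finset (Fin n), gC C x - gC C xstar = (τ:ℝ)⁻¹ • ∑ i ∈ C, a i := by
    intro C
    rw [hgC C x, hgC C xstar, ← smul_sub, ← Finset.sum_sub_distrib]
    rw [Finset.smul_sum, Finset.smul_sum]
    apply Finset.sum_congr rfl
    intro i _
    rw [← smul_sub, smul_smul, hqinv i, ha]
    congr 1
    field_simp
  have hLHS : ∑ C : Finset (Fin n), p C * ‖gC C x - gC C xstar‖ ^ 2
      = ((n.choose τ : ℝ))⁻¹ * ((τ:ℝ)⁻¹) ^ 2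
        * ∑ C ∈ Finset.univ.filter (fun C : Finset (Fin n) => C.card = τ),
            ‖∑ i ∈ C, a i‖ ^ 2 := by
    have e1 : ∀ C : Finset (Fin n), p C * ‖gC C x - gC C xstar‖ ^ 2
        = if C.card = τ then ((n.choose τ : ℝ))⁻¹ * (((τ:ℝ)⁻¹) ^ 2 * ‖∑ i ∈ C, a i‖ ^ 2)
          else 0 := by
      intro C
      rw [hp C, hgCdiff C, norm_smul]
      by_cases hC : C.card = τ
      · rw [if_pos hC, if_pos hC]
        rw [mul_pow, Real.norm_eq_abs, sq_abs, one_div]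
        try ring
      · rw [if_neg hC, if_neg hC, zero_mul]
    rw [Finset.sum_congr rfl (fun C _ => e1 C), ← Finset.sum_filter, ← Finset.mul_sum,
      ← Finset.mul_sum, mul_assoc]
  rw [hLHS]
  -- use the expectation identity
  have hid := esm_expectation_identity hn hτ1 hτn a
  set Ssum : ℝ := ∑ C ∈ Finset.univ.filter (fun C : Finset (Fin n) => C.card = τ),
      ‖∑ i ∈ C, a i‖ ^ 2 with hSsum
  set S1 : ℝ := ∑ i, ‖a i‖ ^ 2 with hS1d
  set S2 : ℝ := ‖∑ i, a i‖ ^ 2 with hS2d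
  have hSsumval : Ssum = (n.choose τ : ℝ) * ((τ:ℝ) * ((n:ℝ) - (τ:ℝ)) * S1
      + (τ:ℝ) * ((τ:ℝ) - 1) * S2) / ((n:ℝ) * ((n:ℝ)-1)) := by
    rw [eq_div_iff (by positivity)]
    linarith [hid]
  have step1 : ((n.choose τ : ℝ))⁻¹ * ((τ:ℝ)⁻¹) ^ 2 * Ssum
      = ((τ:ℝ) * ((n:ℝ) - (τ:ℝ)) * S1 + (τ:ℝ) * ((τ:ℝ) - 1) * S2)
        / ((τ:ℝ)^2 * ((n:ℝ) * ((n:ℝ)-1))) := by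
    rw [hSsumval]
    field_simp
  rw [step1]
  have hnum_le : (τ:ℝ) * ((n:ℝ) - (τ:ℝ)) * S1 + (τ:ℝ) * ((τ:ℝ) - 1) * S2
      ≤ (τ:ℝ) * ((n:ℝ) - (τ:ℝ)) * (2 * lamb * ((n:ℝ) * D))
        + (τ:ℝ) * ((τ:ℝ) - 1) * ((n:ℝ)^2 * (2 * L * D)) := by
    have c1 : (0:ℝ) ≤ (τ:ℝ) * ((n:ℝ) - (τ:ℝ)) := by
      apply mul_nonneg (le_of_lt hτ0); linarith
    have c2 : (0:ℝ) ≤ (τ:ℝ) * ((τ:ℝ) - 1) := by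
      apply mul_nonneg (le_of_lt hτ0)
      have : (1:ℝ) ≤ (τ:ℝ) := by exact_mod_cast hτ1
      linarith
    exact add_le_add (mul_le_mul_of_nonneg_left hS1 c1) (mul_le_mul_of_nonneg_left hS2 c2)
  have hdenpos : (0:ℝ) < (τ:ℝ)^2 * ((n:ℝ) * ((n:ℝ)-1)) := by positivity
  calc ((τ:ℝ) * ((n:ℝ) - (τ:ℝ)) * S1 + (τ:ℝ) * ((τ:ℝ) - 1) * S2)
        / ((τ:ℝ)^2 * ((n:ℝ) * ((n:ℝ)-1)))
      ≤ ((τ:ℝ) * ((n:ℝ) - (τ:ℝ)) * (2 * lamb * ((n:ℝ) * D))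
          + (τ:ℝ) * ((τ:ℝ) - 1) * ((n:ℝ)^2 * (2 * L * D)))
        / ((τ:ℝ)^2 * ((n:ℝ) * ((n:ℝ)-1))) := by
        gcongr
      _ = 2 * (((n : ℝ) * ((τ : ℝ) - 1)) / ((τ : ℝ) * ((n : ℝ) - 1)) * L
              + ((n : ℝ) - (τ : ℝ)) / ((τ : ℝ) * ((n : ℝ) - 1)) * lamb) * D := by
        rw [div_eq_iff (ne_of_gt hdenpos)]
        have hτne : (τ:ℝ) ≠ 0 := ne_of_gt hτ0
        have hn1ne : (n:ℝ) - 1 ≠ 0 := ne_of_gt hn1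
        field_simp
        ring
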